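/- There exists θ₀ ∈ (0,1) such that for every θ ∈ (0,θ₀] there is a constant C > 0 with the following property: for all ε > 0, t ≥ 0 and r ≥ 1, the time derivative ∂_t D_ε(r,t) of the map t ↦ D_ε(r,t) satisfies (a) |∂_t D_ε(r,t)| ≤ C·e^{−θ·t·r²} if r ≤ (1+θ)/(2ε), and (b) |∂_t D_ε(r,t)| ≤ C·e^{−t/(2ε²)} if r > (1+θ)/(2ε). -/

import Mathlib

/-- The entire function `φ(x) = ∑_{j=0}^∞ x^j/(2j+1)!`. -/
noncomputable def phi (x : ℝ) : ℝ := ∑' j : ℕ, x ^ j / (Nat.factorial (2 * j + 1) : ℝ)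

/-- The damped-wave Fourier symbol `D_ε(r,t) = e^{−t/(2ε²)}·t·φ(t²(1/(4ε⁴) − r²/ε²))`. -/
noncomputable def D (ε r t : ℝ) : ℝ :=
  Real.exp (-t / (2 * ε ^ 2)) * t * phi (t ^ 2 * (1 / (4 * ε ^ 4) - r ^ 2 / ε ^ 2))

lemma phi_zero : phi 0 = 1 := by
  unfold phi
  rw [tsum_eq_single 0 (by intro b hb; simp [zero_pow hb])]
  simp

lemma mul_phi_sq (u : ℝ) : u * phi (u ^ 2) = Real.sinh u := by
  have h := Real.hasSum_sinh u
  have h2 : HasSum (fun j : ℕ => u * ((u ^ 2) ^ j / ((Nat.factorial (2 * j + 1) : ℝ))))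
      (Real.sinh u) := by
    convert h using 2 with j
    rw [← pow_mul]
    ring
  rw [phi, ← tsum_mul_left, h2.tsum_eq]

lemma mul_phi_neg_sq (u : ℝ) : u * phi (-(u ^ 2)) = Real.sin u := by
  have h := Real.hasSum_sin u
  have h2 : HasSum (fun j : ℕ => u * ((-(u ^ 2)) ^ j / ((Nat.factorial (2 * j + 1) : ℝ))))
      (Real.sin u) := by
    convert h using 2 with j
    rw [neg_pow, ← pow_mul]
    ring
  rw [phi, ← tsum_mul_left, h2.tsum_eq]

lemma D_eq_sinh (ε r s : ℝ) (hs : 0 < s) (ha : s ^ 2 = 1 / (4 * ε ^ 4) - r ^ 2 / ε ^ 2) :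
    D ε r = fun t => Real.exp (-t / (2 * ε ^ 2)) * (Real.sinh (s * t) / s) := by
  funext t
  unfold D
  rw [← ha]
  have h1 : t ^ 2 * s ^ 2 = (s * t) ^ 2 := by ring
  rw [h1, mul_assoc]
  congr 1
  rw [eq_div_iff hs.ne', ← mul_phi_sq (s * t)]
  ring

lemma D_eq_sin (ε r z : ℝ) (hz : 0 < z) (ha : -(z ^ 2) = 1 / (4 * ε ^ 4) - r ^ 2 / ε ^ 2) :
    D ε r = fun t => Real.exp (-t / (2 * ε ^ 2)) * (Real.sin (z * t) / z) := by
  funext t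
  unfold D
  rw [← ha]
  have h1 : t ^ 2 * -(z ^ 2) = -((z * t) ^ 2) := by ring
  rw [h1, mul_assoc]
  congr 1
  rw [eq_div_iff hz.ne', ← mul_phi_neg_sq (z * t)]
  ring

lemma D_eq_lin (ε r : ℝ) (ha : 1 / (4 * ε ^ 4) - r ^ 2 / ε ^ 2 = 0) :
    D ε r = fun t => Real.exp (-t / (2 * ε ^ 2)) * t := by
  funext t
  unfold D
  rw [ha, mul_zero, phi_zero, mul_one]

lemma hasDerivAt_exp_part (ε t : ℝ) :
    HasDerivAt (fun t : ℝ => Real.exp (-t / (2 * ε ^ 2)))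
      (Real.exp (-t / (2 * ε ^ 2)) * (-1 / (2 * ε ^ 2))) t :=
  (((hasDerivAt_id t).neg).div_const (2 * ε ^ 2)).exp

lemma deriv_D_sinh (ε r s t : ℝ) (hs : 0 < s)
    (ha : s ^ 2 = 1 / (4 * ε ^ 4) - r ^ 2 / ε ^ 2) :
    deriv (D ε r) t = Real.exp (-t / (2 * ε ^ 2)) *
      (Real.cosh (s * t) - (1 / (2 * ε ^ 2)) * (Real.sinh (s * t) / s)) := by
  rw [D_eq_sinh ε r s hs ha]
  have h1 := (((hasDerivAt_id t).const_mul s).sinh).div_const s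
  have h2 := (hasDerivAt_exp_part ε t).mul h1
  simp only [id_eq, mul_one] at h2
  simp only [Pi.mul_def, id_eq] at h2
  rw [h2.deriv]
  field_simp
  ring

lemma deriv_D_sin (ε r z t : ℝ) (hz : 0 < z)
    (ha : -(z ^ 2) = 1 / (4 * ε ^ 4) - r ^ 2 / ε ^ 2) :
    deriv (D ε r) t = Real.exp (-t / (2 * ε ^ 2)) *
      (Real.cos (z * t) - (1 / (2 * ε ^ 2)) * (Real.sin (z * t) / z)) := by
  rw [D_eq_sin ε r z hz ha]
  have h1 := (((hasDerivAt_id t).const_mul z).sin).div_const z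
  have h2 := (hasDerivAt_exp_part ε t).mul h1
  simp only [id_eq, mul_one] at h2
  simp only [Pi.mul_def, id_eq] at h2
  rw [h2.deriv]
  field_simp
  ring

lemma deriv_D_lin (ε r t : ℝ) (ha : 1 / (4 * ε ^ 4) - r ^ 2 / ε ^ 2 = 0) :
    deriv (D ε r) t = Real.exp (-t / (2 * ε ^ 2)) *
      (1 - (1 / (2 * ε ^ 2)) * t) := by
  rw [D_eq_lin ε r ha]
  have h2 := (hasDerivAt_exp_part ε t).mul (hasDerivAt_id t)
  simp only [id_eq, mul_one] at h2
  simp only [Pi.mul_def, id_eq] at h2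
  rw [h2.deriv]
  ring

lemma xexp_le (c X : ℝ) (hc : c ≤ 9/16) :
    X * Real.exp (-X) ≤ 3 * Real.exp (-(c * X)) := by
  have hsplit : Real.exp (-X) = Real.exp (-((1 - c) * X)) * Real.exp (-(c * X)) := by
    rw [← Real.exp_add]; ring_nf
  have key : X * Real.exp (-((1 - c) * X)) ≤ 3 := by
    have e1 := Real.add_one_le_exp ((1 - c) * X)
    have e2 : Real.exp (-((1 - c) * X)) * Real.exp ((1 - c) * X) = 1 := by
      rw [← Real.exp_add]; ring_nf; exact Real.exp_zero
    have e3 := Real.exp_pos (-((1 - c) * X))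
    nlinarith [mul_le_mul_of_nonneg_right e1 e3.le]
  calc X * Real.exp (-X) = (X * Real.exp (-((1 - c) * X))) * Real.exp (-(c * X)) := by
        rw [hsplit]; ring
    _ ≤ 3 * Real.exp (-(c * X)) :=
        mul_le_mul_of_nonneg_right key (Real.exp_pos _).le

lemma sinh_le_mul_exp (x : ℝ) : Real.sinh x ≤ x * Real.exp x := by
  rw [Real.sinh_eq]
  have e : Real.exp (-x) = Real.exp x * Real.exp (-(2 * x)) := by
    rw [← Real.exp_add]; ring_nf
  have h := Real.add_one_le_exp (-(2 * x))
  nlinarith [Real.exp_pos x]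

lemma bound_lin (θ μ r t : ℝ) (hθ0 : 0 < θ) (hθ : θ ≤ 1/2) (hμ : 0 < μ)
    (hr : (8/9) * r ^ 2 ≤ μ) (ht : 0 ≤ t) :
    Real.exp (-(μ * t)) * (1 + μ * t) ≤ 4 * Real.exp (-θ * t * r ^ 2) := by
  have hrt : θ * t * r ^ 2 ≤ (9/8) * θ * (μ * t) := by nlinarith [mul_nonneg hθ0.le ht]
  have e1 : Real.exp (-(μ * t)) ≤ Real.exp (-θ * t * r ^ 2) := by
    apply Real.exp_le_exp.mpr
    nlinarith [mul_nonneg hμ.le ht, mul_nonneg hθ0.le ht]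
  have e2 : (μ * t) * Real.exp (-(μ * t)) ≤ 3 * Real.exp (-θ * t * r ^ 2) := by
    have h1 := xexp_le ((9/8) * θ) (μ * t) (by linarith)
    refine h1.trans ?_
    have : Real.exp (-((9/8) * θ * (μ * t))) ≤ Real.exp (-θ * t * r ^ 2) :=
      Real.exp_le_exp.mpr (by linarith)
    linarith
  nlinarith [Real.exp_pos (-(μ * t))]

set_option maxHeartbeats 1000000 in
/-- There is `θ₀ ∈ (0,1)` such that for every `θ ∈ (0,θ₀]` there is `C > 0` with:
for all `ε > 0`, `t ≥ 0`, `r ≥ 1`,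
(a) `|∂_t D_ε(r,t)| ≤ C e^{−θtr²}` if `r ≤ (1+θ)/(2ε)`, and
(b) `|∂_t D_ε(r,t)| ≤ C e^{−t/(2ε²)}` if `r > (1+θ)/(2ε)`. -/
theorem dampedWave_symbol_timeDeriv_bounds :
    ∃ θ₀ : ℝ, θ₀ ∈ Set.Ioo (0:ℝ) 1 ∧
      ∀ θ ∈ Set.Ioc (0:ℝ) θ₀, ∃ C : ℝ, 0 < C ∧
        ∀ ε t r : ℝ, 0 < ε → 0 ≤ t → 1 ≤ r →
          (r ≤ (1 + θ) / (2 * ε) →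
            |deriv (D ε r) t| ≤ C * Real.exp (-θ * t * r ^ 2)) ∧
          ((1 + θ) / (2 * ε) < r →
            |deriv (D ε r) t| ≤ C * Real.exp (-t / (2 * ε ^ 2))) := by
  refine ⟨1/2, ⟨by norm_num, by norm_num⟩, ?_⟩
  rintro θ ⟨hθ0, hθh⟩
  have hsθ : 0 < Real.sqrt θ := Real.sqrt_pos.mpr hθ0
  refine ⟨4 + 1 / Real.sqrt θ, by positivity, ?_⟩
  intro ε t r hε ht hr
  obtain ⟨μ, hμ, hμdef⟩ : ∃ μ : ℝ, 0 < μ ∧ μ = 1 / (2 * ε ^ 2) :=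
    ⟨_, by positivity, rfl⟩
  have hEμ : -t / (2 * ε ^ 2) = -(μ * t) := by rw [hμdef]; ring
  have ha_eq : 1 / (4 * ε ^ 4) - r ^ 2 / ε ^ 2 = μ ^ 2 - 2 * μ * r ^ 2 := by
    rw [hμdef]; field_simp; ring
  have hC0 : (0:ℝ) ≤ 1 / Real.sqrt θ := by positivity
  constructor
  · -- Case (a)
    intro hra
    have h2er : r * (2 * ε) ≤ 1 + θ := (le_div_iff₀ (by positivity)).mp hra
    have hre : (0:ℝ) ≤ r * (2 * ε) := mul_nonneg (by linarith) (by linarith)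
    have hsq : (r * (2 * ε)) * (r * (2 * ε)) ≤ (1 + θ) * (1 + θ) :=
      mul_self_le_mul_self hre h2er
    have hr98 : (8/9) * r ^ 2 ≤ μ := by
      rw [hμdef, le_div_iff₀ (by positivity)]
      nlinarith [hsq, hθ0, hθh]
    rcases lt_trichotomy (μ ^ 2 - 2 * μ * r ^ 2) 0 with haneg | hazero | hapos
    · -- oscillatory
      obtain ⟨z, hz, hz2⟩ : ∃ z : ℝ, 0 < z ∧ z ^ 2 = 2 * μ * r ^ 2 - μ ^ 2 :=
        ⟨Real.sqrt _, Real.sqrt_pos.mpr (by linarith), Real.sq_sqrt (by linarith)⟩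
      rw [deriv_D_sin ε r z t hz (by rw [ha_eq, hz2]; ring), hEμ, ← hμdef]
      rw [abs_mul, abs_of_pos (Real.exp_pos _)]
      have habs : |Real.cos (z * t) - μ * (Real.sin (z * t) / z)| ≤ 1 + μ * t := by
        have h1 : |Real.cos (z * t)| ≤ 1 := Real.abs_cos_le_one _
        have h2 : |Real.sin (z * t)| ≤ z * t := by
          have h3 := Real.abs_sin_le_abs (x := z * t)
          rwa [abs_of_nonneg (mul_nonneg hz.le ht)] at h3
        have h4 : |μ * (Real.sin (z * t) / z)| ≤ μ * t := by
          rw [abs_mul, abs_of_pos hμ, abs_div, abs_of_pos hz]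
          have h5 : |Real.sin (z * t)| / z ≤ t := by
            rw [div_le_iff₀ hz]
            linarith [h2]
          exact mul_le_mul_of_nonneg_left h5 hμ.le
        calc |Real.cos (z * t) - μ * (Real.sin (z * t) / z)|
            ≤ |Real.cos (z * t)| + |μ * (Real.sin (z * t) / z)| := abs_sub _ _
          _ ≤ 1 + μ * t := add_le_add h1 h4
      calc Real.exp (-(μ * t)) * |Real.cos (z * t) - μ * (Real.sin (z * t) / z)|
          ≤ Real.exp (-(μ * t)) * (1 + μ * t) :=
            mul_le_mul_of_nonneg_left habs (Real.exp_pos _).le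
        _ ≤ 4 * Real.exp (-θ * t * r ^ 2) := bound_lin θ μ r t hθ0 hθh hμ hr98 ht
        _ ≤ (4 + 1 / Real.sqrt θ) * Real.exp (-θ * t * r ^ 2) := by
            nlinarith [Real.exp_pos (-θ * t * r ^ 2), mul_nonneg hC0 (Real.exp_pos (-θ * t * r ^ 2)).le]
    · -- a = 0
      rw [deriv_D_lin ε r t (by rw [ha_eq]; exact hazero), hEμ, ← hμdef]
      rw [abs_mul, abs_of_pos (Real.exp_pos _)]
      have habs : |1 - μ * t| ≤ 1 + μ * t := by
        have := abs_sub (1:ℝ) (μ * t)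
        rw [abs_one, abs_of_nonneg (mul_nonneg hμ.le ht)] at this
        exact this
      calc Real.exp (-(μ * t)) * |1 - μ * t|
          ≤ Real.exp (-(μ * t)) * (1 + μ * t) :=
            mul_le_mul_of_nonneg_left habs (Real.exp_pos _).le
        _ ≤ 4 * Real.exp (-θ * t * r ^ 2) := bound_lin θ μ r t hθ0 hθh hμ hr98 ht
        _ ≤ (4 + 1 / Real.sqrt θ) * Real.exp (-θ * t * r ^ 2) := by
            nlinarith [Real.exp_pos (-θ * t * r ^ 2), mul_nonneg hC0 (Real.exp_pos (-θ * t * r ^ 2)).le]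
    · -- hyperbolic
      obtain ⟨s, hs, hs2⟩ : ∃ s : ℝ, 0 < s ∧ s ^ 2 = μ ^ 2 - 2 * μ * r ^ 2 :=
        ⟨Real.sqrt _, Real.sqrt_pos.mpr (by linarith), Real.sq_sqrt (by linarith)⟩
      rw [deriv_D_sinh ε r s t hs (by rw [ha_eq, hs2]), hEμ, ← hμdef]
      have hμ2r : 2 * r ^ 2 < μ := by nlinarith [hμ]
      have hsμ : s ≤ μ := by nlinarith [hs2, mul_nonneg hμ.le (sq_nonneg r), hs.le, hμ.le]
      have hms : r ^ 2 ≤ μ - s := by nlinarith [hs2, hμ, sq_nonneg (μ - s)]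
      have hst : (0:ℝ) ≤ s * t := mul_nonneg hs.le ht
      have hsinh0 : 0 ≤ Real.sinh (s * t) := Real.sinh_nonneg_iff.mpr hst
      have hcs : Real.cosh (s * t) - μ * (Real.sinh (s * t) / s) =
          Real.exp (-(s * t)) - ((μ - s) / s) * Real.sinh (s * t) := by
        field_simp
        linear_combination s * Real.cosh_sub_sinh (s * t)
      rw [hcs, abs_mul, abs_of_pos (Real.exp_pos _)]
      have hB : 0 ≤ ((μ - s) / s) * Real.sinh (s * t) :=
        mul_nonneg (div_nonneg (by linarith) hs.le) hsinh0
      have habs : |Real.exp (-(s * t)) - ((μ - s) / s) * Real.sinh (s * t)| ≤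
          Real.exp (-(s * t)) + ((μ - s) / s) * Real.sinh (s * t) := by
        have hA : (0:ℝ) ≤ Real.exp (-(s * t)) := (Real.exp_pos _).le
        rw [abs_le]
        constructor <;> linarith
      have E0 : Real.exp (-(μ * t)) * |Real.exp (-(s * t)) - ((μ - s) / s) * Real.sinh (s * t)| ≤
          Real.exp (-(μ * t)) * Real.exp (-(s * t)) +
          Real.exp (-(μ * t)) * (((μ - s) / s) * Real.sinh (s * t)) := by
        rw [← mul_add]
        exact mul_le_mul_of_nonneg_left habs (Real.exp_pos _).le
      have E1 : Real.exp (-(μ * t)) * Real.exp (-(s * t)) ≤ Real.exp (-θ * t * r ^ 2) := by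
        rw [← Real.exp_add]
        apply Real.exp_le_exp.mpr
        nlinarith [mul_nonneg ht (sq_nonneg r), mul_nonneg (mul_nonneg ht (by linarith : (0:ℝ) ≤ 1 - θ)) (sq_nonneg r),
          mul_nonneg ht hs.le, mul_nonneg ht (by linarith : (0:ℝ) ≤ μ - 2 * r ^ 2)]
      have E2 : Real.exp (-(μ * t)) * (((μ - s) / s) * Real.sinh (s * t)) ≤
          3 * Real.exp (-θ * t * r ^ 2) := by
        have hterm2 : ((μ - s) / s) * Real.sinh (s * t) ≤ (μ - s) * t * Real.exp (s * t) := by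
          have h := sinh_le_mul_exp (s * t)
          have h2 : ((μ - s) / s) * Real.sinh (s * t) ≤
              ((μ - s) / s) * ((s * t) * Real.exp (s * t)) :=
            mul_le_mul_of_nonneg_left h (div_nonneg (by linarith) hs.le)
          refine h2.trans (le_of_eq ?_)
          field_simp
        have e2a : Real.exp (-(μ * t)) * (((μ - s) / s) * Real.sinh (s * t)) ≤
            Real.exp (-(μ * t)) * ((μ - s) * t * Real.exp (s * t)) :=
          mul_le_mul_of_nonneg_left hterm2 (Real.exp_pos _).le
        have e2b : Real.exp (-(μ * t)) * ((μ - s) * t * Real.exp (s * t)) =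
            ((μ - s) * t) * Real.exp (-((μ - s) * t)) := by
          have h3 : Real.exp (-(μ * t)) * Real.exp (s * t) = Real.exp (-((μ - s) * t)) := by
            rw [← Real.exp_add]; congr 1; ring
          calc Real.exp (-(μ * t)) * ((μ - s) * t * Real.exp (s * t))
              = ((μ - s) * t) * (Real.exp (-(μ * t)) * Real.exp (s * t)) := by ring
            _ = ((μ - s) * t) * Real.exp (-((μ - s) * t)) := by rw [h3]
        have e2c := xexp_le θ ((μ - s) * t) (by linarith)
        have e2d : Real.exp (-(θ * ((μ - s) * t))) ≤ Real.exp (-θ * t * r ^ 2) := by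
          apply Real.exp_le_exp.mpr
          nlinarith [mul_nonneg (mul_nonneg hθ0.le ht) (by linarith : (0:ℝ) ≤ μ - s - r ^ 2)]
        rw [e2b] at e2a
        linarith [e2a, e2c, e2d]
      calc Real.exp (-(μ * t)) * |Real.exp (-(s * t)) - ((μ - s) / s) * Real.sinh (s * t)|
          ≤ 4 * Real.exp (-θ * t * r ^ 2) := by linarith [E0, E1, E2]
        _ ≤ (4 + 1 / Real.sqrt θ) * Real.exp (-θ * t * r ^ 2) := by
            nlinarith [Real.exp_pos (-θ * t * r ^ 2), mul_nonneg hC0 (Real.exp_pos (-θ * t * r ^ 2)).le]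
  · -- Case (b)
    intro hrb
    have h2er : 1 + θ < r * (2 * ε) := by
      have := (div_lt_iff₀ (by positivity : (0:ℝ) < 2 * ε)).mp hrb
      linarith
    have h1r : 1 < r * (2 * ε) := by linarith
    have hμlt : μ < 2 * r ^ 2 := by
      rw [hμdef, div_lt_iff₀ (by positivity)]
      nlinarith [h1r, mul_self_nonneg (r * (2 * ε) - 1)]
    have haneg : μ ^ 2 - 2 * μ * r ^ 2 < 0 := by nlinarith [hμ]
    obtain ⟨z, hz, hz2⟩ : ∃ z : ℝ, 0 < z ∧ z ^ 2 = 2 * μ * r ^ 2 - μ ^ 2 :=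
      ⟨Real.sqrt _, Real.sqrt_pos.mpr (by linarith), Real.sq_sqrt (by linarith)⟩
    rw [deriv_D_sin ε r z t hz (by rw [ha_eq, hz2]; ring), ← hμdef]
    rw [abs_mul, abs_of_pos (Real.exp_pos _), mul_comm]
    refine mul_le_mul_of_nonneg_right ?_ (Real.exp_pos _).le
    have hr2 : (1 + θ) ^ 2 * μ ≤ 2 * r ^ 2 := by
      rw [hμdef, mul_one_div, div_le_iff₀ (by positivity)]
      nlinarith [mul_self_le_mul_self (by linarith : (0:ℝ) ≤ 1 + θ) h2er.le]
    have hz2' : θ * μ ^ 2 ≤ z ^ 2 := by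
      rw [hz2]
      nlinarith [mul_le_mul_of_nonneg_left hr2 hμ.le, hμ, hθ0,
        mul_nonneg hθ0.le (sq_nonneg μ)]
    have hzμ : Real.sqrt θ * μ ≤ z := by
      nlinarith [Real.sq_sqrt hθ0.le, hsθ, hz, hz2', hμ, mul_pos hsθ hμ]
    have h4 : μ / z ≤ 1 / Real.sqrt θ := by
      rw [div_le_div_iff₀ hz hsθ]
      linarith
    have h5 : |μ * (Real.sin (z * t) / z)| ≤ μ / z := by
      rw [abs_mul, abs_of_pos hμ, abs_div, abs_of_pos hz]
      calc μ * (|Real.sin (z * t)| / z) ≤ μ * (1 / z) := by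
            gcongr
            exact Real.abs_sin_le_one _
        _ = μ / z := by ring
    calc |Real.cos (z * t) - μ * (Real.sin (z * t) / z)|
        ≤ |Real.cos (z * t)| + |μ * (Real.sin (z * t) / z)| := abs_sub _ _
      _ ≤ 1 + 1 / Real.sqrt θ := add_le_add (Real.abs_cos_le_one _) (h5.trans h4)
      _ ≤ 4 + 1 / Real.sqrt θ := by linarith
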